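/- In the AI regulation game with quadratic costs, suppose C1 is positive definite. Let θD ≥ 0, let γ0 = (α0, β0) with β0 ≥ 0, and suppose γ1 = (α1, β1) maximizes γ1 ↦ U_D(γ0, γ1) over the regulated feasible set F(γ0, θD) = {(α, β) : α ≥ α0, β ≥ max(β0, θD)} with β1 > θD. Then γ1 also maximizes γ1 ↦ U_D(γ0, γ1) over the unregulated feasible set {(α, β) : α ≥ α0, β ≥ β0}. (Strategies in which the specialist contributes beyond the regulatory floor are exactly unregulated best responses.) -/

import Mathlib

open Matrix

/-- The domain specialist's utility
`U_D(γ0, γ1) = (1−δ)·(rα·α1 + rβ·β1) − (γ1−γ0)ᵀ C1 (γ1−γ0)`. -/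
noncomputable def UD (c1aa c1ab c1bb rα rβ δ : ℝ) (γ0 γ1 : Fin 2 → ℝ) : ℝ :=
  (1 - δ) * (rα * γ1 0 + rβ * γ1 1)
    - (γ1 - γ0) ⬝ᵥ ((!![c1aa, c1ab; c1ab, c1bb] : Matrix (Fin 2) (Fin 2) ℝ) *ᵥ (γ1 - γ0))

lemma UD_eq (c1aa c1ab c1bb rα rβ δ : ℝ) (γ0 γ1 : Fin 2 → ℝ) :
    UD c1aa c1ab c1bb rα rβ δ γ0 γ1 =
      (1 - δ) * (rα * γ1 0 + rβ * γ1 1)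
        - (c1aa * (γ1 0 - γ0 0) ^ 2 + 2 * c1ab * (γ1 0 - γ0 0) * (γ1 1 - γ0 1)
            + c1bb * (γ1 1 - γ0 1) ^ 2) := by
  simp [UD, Matrix.mulVec, dotProduct, Fin.sum_univ_two]
  ring

lemma concave_step (A B Q t : ℝ) (ht : 0 < t) (ht1 : t < 1) (hQ : 0 ≤ Q)
    (h : (1 - t) * B + t * A + t * (1 - t) * Q ≤ B) : A ≤ B := by
  nlinarith [mul_nonneg (mul_nonneg ht.le (sub_pos.2 ht1).le) hQ]

/-- If the specialist's best response over the regulated feasible set contributes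
strictly beyond the regulatory floor (`β1 > θD`), then it is also a best response over
the unregulated feasible set. -/
theorem contributing_best_response_is_unregulated_best_response
    (c1aa c1bb c1ab rα rβ δ θD : ℝ)
    (hc1aa : 0 < c1aa) (hc1bb : 0 < c1bb)
    (hrα : 0 < rα) (hrβ : 0 < rβ) (hδ0 : 0 < δ) (hδ1 : δ < 1)
    (hC1 : (!![c1aa, c1ab; c1ab, c1bb] : Matrix (Fin 2) (Fin 2) ℝ).PosDef)
    (hθD : 0 ≤ θD)
    (γ0 γ1 : Fin 2 → ℝ) (hβ0 : 0 ≤ γ0 1)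
    (hfeas : γ0 0 ≤ γ1 0 ∧ max (γ0 1) θD ≤ γ1 1)
    (hmax : ∀ γ : Fin 2 → ℝ, γ0 0 ≤ γ 0 → max (γ0 1) θD ≤ γ 1 →
      UD c1aa c1ab c1bb rα rβ δ γ0 γ ≤ UD c1aa c1ab c1bb rα rβ δ γ0 γ1)
    (hcontrib : θD < γ1 1) :
    ∀ γ : Fin 2 → ℝ, γ0 0 ≤ γ 0 → γ0 1 ≤ γ 1 →
      UD c1aa c1ab c1bb rα rβ δ γ0 γ ≤ UD c1aa c1ab c1bb rα rβ δ γ0 γ1 := by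
  intro γ ha hb
  by_cases hbθ : θD ≤ γ 1
  · exact hmax γ ha (max_le hb hbθ)
  push_neg at hbθ
  -- γ 1 < θD < γ1 1 : move from γ1 toward γ until the second coordinate equals θD
  set t : ℝ := (γ1 1 - θD) / (γ1 1 - γ 1) with htdef
  have hden : 0 < γ1 1 - γ 1 := by linarith
  have htpos : 0 < t := div_pos (by linarith) hden
  have ht1 : t < 1 := (div_lt_one hden).2 (by linarith)
  have htb : t * (γ1 1 - γ 1) = γ1 1 - θD := div_mul_cancel₀ _ (ne_of_gt hden)
  have hθeq : θD = γ1 1 + t * (γ 1 - γ1 1) := by linarith [htb]; 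
  set γt : Fin 2 → ℝ := ![γ1 0 + t * (γ 0 - γ1 0), θD] with hγt
  have hγt0 : γt 0 = γ1 0 + t * (γ 0 - γ1 0) := rfl
  have hγt1 : γt 1 = θD := rfl
  have hb0θ : γ0 1 ≤ θD := le_of_lt (lt_of_le_of_lt hb hbθ)
  have hfeas0 : γ0 0 ≤ γt 0 := by
    rw [hγt0]
    nlinarith [mul_le_mul_of_nonneg_left (sub_nonneg.2 ha) (le_of_lt htpos)]
  have hfeas1 : max (γ0 1) θD ≤ γt 1 := by
    rw [hγt1]; exact max_le hb0θ le_rfl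
  have hkey := hmax γt hfeas0 hfeas1
  -- positive semidefiniteness at the vector γ1 - γ
  have hQ := hC1.posSemidef.dotProduct_mulVec_nonneg (γ1 - γ)
  have hQ' : 0 ≤ c1aa * (γ1 0 - γ 0) ^ 2 + 2 * c1ab * (γ1 0 - γ 0) * (γ1 1 - γ 1)
      + c1bb * (γ1 1 - γ 1) ^ 2 := by
    simp [Matrix.mulVec, dotProduct, Fin.sum_univ_two] at hQ
    nlinarith [hQ]
  rw [UD_eq, UD_eq] at hkey ⊢
  rw [hγt0, hγt1, hθeq] at hkey
  refine concave_step _ _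
    (c1aa * (γ1 0 - γ 0) ^ 2 + 2 * c1ab * (γ1 0 - γ 0) * (γ1 1 - γ 1)
      + c1bb * (γ1 1 - γ 1) ^ 2) t htpos ht1 hQ' ?_
  calc (1 - t) * ((1 - δ) * (rα * γ1 0 + rβ * γ1 1)
          - (c1aa * (γ1 0 - γ0 0) ^ 2 + 2 * c1ab * (γ1 0 - γ0 0) * (γ1 1 - γ0 1)
              + c1bb * (γ1 1 - γ0 1) ^ 2))
        + t * ((1 - δ) * (rα * γ 0 + rβ * γ 1)
          - (c1aa * (γ 0 - γ0 0) ^ 2 + 2 * c1ab * (γ 0 - γ0 0) * (γ 1 - γ0 1)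
              + c1bb * (γ 1 - γ0 1) ^ 2))
        + t * (1 - t) * (c1aa * (γ1 0 - γ 0) ^ 2
          + 2 * c1ab * (γ1 0 - γ 0) * (γ1 1 - γ 1) + c1bb * (γ1 1 - γ 1) ^ 2)
      = (1 - δ) * (rα * (γ1 0 + t * (γ 0 - γ1 0)) + rβ * (γ1 1 + t * (γ 1 - γ1 1)))
        - (c1aa * (γ1 0 + t * (γ 0 - γ1 0) - γ0 0) ^ 2
            + 2 * c1ab * (γ1 0 + t * (γ 0 - γ1 0) - γ0 0)
                * (γ1 1 + t * (γ 1 - γ1 1) - γ0 1)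
            + c1bb * (γ1 1 + t * (γ 1 - γ1 1) - γ0 1) ^ 2) := by ring
    _ ≤ _ := hkey
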